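/- The tAND nets are redundant for generating AND-OR nets: the substitution closure S(pAND ∪ 11tAND ∪ 11pOR ∪ tOR) equals S(pAND ∪ 11pOR ∪ tOR). -/

import Mathlib

structure Net where
  P : Finset ℕ
  T : Finset ℕ
  F : Finset (ℕ × ℕ)
  I : Finset ℕ
  O : Finset ℕ

namespace Net

def nodes (N : Net) : Finset ℕ := N.P ∪ N.T

def IsPetri (N : Net) : Prop :=
  Disjoint N.P N.T ∧ ∀ e ∈ N.F, (e.1 ∈ N.P ∧ e.2 ∈ N.T) ∨ (e.1 ∈ N.T ∧ e.2 ∈ N.P)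

def edge (N : Net) (x y : ℕ) : Prop := (x, y) ∈ N.F

def pathReach (N : Net) : ℕ → ℕ → Prop := Relation.ReflTransGen N.edge

def Connected (N : Net) : Prop :=
  (∀ x ∈ N.nodes, ∃ i ∈ N.I, N.pathReach i x) ∧
  (∀ x ∈ N.nodes, ∃ o ∈ N.O, N.pathReach x o)

/-- place workflow net -/
def IsPWF (N : Net) : Prop :=
  N.IsPetri ∧ N.I ⊆ N.P ∧ N.O ⊆ N.P ∧ N.I.Nonempty ∧ N.O.Nonempty ∧ N.Connected

/-- transition workflow net -/
def IsTWF (N : Net) : Prop :=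
  N.IsPetri ∧ N.I ⊆ N.T ∧ N.O ⊆ N.T ∧ N.I.Nonempty ∧ N.O.Nonempty ∧ N.Connected

def IsWF (N : Net) : Prop := N.IsPWF ∨ N.IsTWF

abbrev Marking := ℕ → ℕ

def pre (N : Net) (t : ℕ) : Marking := fun p => if (p, t) ∈ N.F then 1 else 0
def post (N : Net) (t : ℕ) : Marking := fun p => if (t, p) ∈ N.F then 1 else 0
def enabled (N : Net) (t : ℕ) (m : Marking) : Prop := t ∈ N.T ∧ N.pre t ≤ m
def fire (N : Net) (t : ℕ) (m : Marking) : Marking := fun p => m p - N.pre t p + N.post t p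
def stepRel (N : Net) (m m' : Marking) : Prop := ∃ t, N.enabled t m ∧ m' = N.fire t m
def reach (N : Net) : Marking → Marking → Prop := Relation.ReflTransGen N.stepRel

/-- the marking with `k` tokens on each element of `S` -/
def bag (k : ℕ) (S : Finset ℕ) : Marking := fun p => if p ∈ S then k else 0

def kSound (N : Net) (k : ℕ) : Prop :=
  ∀ m, N.reach (bag k N.I) m → N.reach m (bag k N.O)

def starSound (N : Net) : Prop := ∀ k, 1 ≤ k → N.kSound k

def subSound (N : Net) : Prop :=
  ∀ k k' : ℕ, k' ≤ k → ∀ m : Marking,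
    N.reach (bag k N.I) (m + bag k' N.O) → N.reach m (bag (k - k') N.O)

/-- place completion of a tWF net -/
def pc (N : Net) (pi po : ℕ) : Net where
  P := insert pi (insert po N.P)
  T := N.T
  F := (N.I.image fun t => (pi, t)) ∪ (N.O.image fun t => (t, po)) ∪ N.F
  I := {pi}
  O := {po}

/-- transition completion of a pWF net -/
def tc (N : Net) (t_i t_o : ℕ) : Net where
  P := N.P
  T := insert t_i (insert t_o N.T)
  F := (N.I.image fun p => (t_i, p)) ∪ (N.O.image fun p => (p, t_o)) ∪ N.F
  I := {t_i}
  O := {t_o}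

/-- *-soundness of a tWF net: its place completion (for fresh names) is *-sound -/
def tStarSound (N : Net) : Prop :=
  ∀ pi po : ℕ, pi ∉ N.nodes → po ∉ N.nodes → pi ≠ po → (N.pc pi po).starSound

/-- sub-soundness of a tWF net: its place completion (for fresh names) is sub-sound -/
def tSubSound (N : Net) : Prop :=
  ∀ pi po : ℕ, pi ∉ N.nodes → po ∉ N.nodes → pi ≠ po → (N.pc pi po).subSound

/-- preset of a node, as a finset -/
def inEdges (N : Net) (n : ℕ) : Finset ℕ := (N.F.filter fun e => e.2 = n).image Prod.fst
/-- postset of a node, as a finset -/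
def outEdges (N : Net) (n : ℕ) : Finset ℕ := (N.F.filter fun e => e.1 = n).image Prod.snd

/-- substitution of the node `n` of `N` by the net `M` (place or transition substitution,
depending on the type of `n`): each input node of `M` inherits the preset of `n`, each
output node of `M` inherits the postset of `n`. -/
def subst (N : Net) (n : ℕ) (M : Net) : Net where
  P := (N.P.erase n) ∪ M.P
  T := (N.T.erase n) ∪ M.T
  F := (N.F.filter fun e => e.1 ≠ n ∧ e.2 ≠ n) ∪ M.F
        ∪ (N.inEdges n ×ˢ M.I) ∪ (M.O ×ˢ N.outEdges n)
  I := if n ∈ N.I then (N.I.erase n) ∪ M.I else N.I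
  O := if n ∈ N.O then (N.O.erase n) ∪ M.O else N.O

def Acyclic (N : Net) : Prop := ∀ x, ¬ Relation.TransGen N.edge x x

/-- AND net condition (on top of being a WF net) -/
def IsAND (N : Net) : Prop :=
  N.Acyclic ∧ ∀ p ∈ N.P,
    ((p ∈ N.I ∧ (N.inEdges p).card = 0) ∨ (p ∉ N.I ∧ (N.inEdges p).card = 1)) ∧
    ((p ∈ N.O ∧ (N.outEdges p).card = 0) ∨ (p ∉ N.O ∧ (N.outEdges p).card = 1))

/-- OR net condition (on top of being a WF net) -/
def IsOR (N : Net) : Prop :=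
  ∀ t ∈ N.T,
    ((t ∈ N.I ∧ (N.inEdges t).card = 0) ∨ (t ∉ N.I ∧ (N.inEdges t).card = 1)) ∧
    ((t ∈ N.O ∧ (N.outEdges t).card = 0) ∨ (t ∉ N.O ∧ (N.outEdges t).card = 1))

end Net
/-- substitution closure of a class of nets -/
inductive SClos (C : Net → Prop) : Net → Prop
  | base (N : Net) : C N → SClos C N
  | substP (N M : Net) (p : ℕ) : SClos C N → SClos C M → M.IsPWF → p ∈ N.P →
      Disjoint N.nodes M.nodes → SClos C (N.subst p M)
  | substT (N M : Net) (t : ℕ) : SClos C N → SClos C M → M.IsTWF → t ∈ N.T →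
      Disjoint N.nodes M.nodes → SClos C (N.subst t M)

def pANDClass (N : Net) : Prop := N.IsPWF ∧ N.IsAND
def tAND11Class (N : Net) : Prop := N.IsTWF ∧ N.IsAND ∧ N.I.card = 1 ∧ N.O.card = 1
def pOR11Class (N : Net) : Prop := N.IsPWF ∧ N.IsOR ∧ N.I.card = 1 ∧ N.O.card = 1
def tORClass (N : Net) : Prop := N.IsTWF ∧ N.IsOR

namespace Net

theorem ext' {A B : Net} (h1 : A.P = B.P) (h2 : A.T = B.T) (h3 : A.F = B.F)
    (h4 : A.I = B.I) (h5 : A.O = B.O) : A = B := by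
  cases A; cases B; simp_all

theorem mem_inEdges' {N : Net} {n a : ℕ} : a ∈ N.inEdges n ↔ (a, n) ∈ N.F := by
  simp only [inEdges, Finset.mem_image, Finset.mem_filter]
  constructor
  · rintro ⟨⟨x, y⟩, ⟨hF, rfl⟩, rfl⟩; exact hF
  · intro h; exact ⟨(a, n), ⟨h, rfl⟩, rfl⟩

theorem mem_outEdges' {N : Net} {n b : ℕ} : b ∈ N.outEdges n ↔ (n, b) ∈ N.F := by
  simp only [outEdges, Finset.mem_image, Finset.mem_filter]
  constructor
  · rintro ⟨⟨x, y⟩, ⟨hF, rfl⟩, rfl⟩; exact hF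
  · intro h; exact ⟨(n, b), ⟨h, rfl⟩, rfl⟩

end Net

theorem keyLemma (N : Net) (h : tAND11Class N) :
    SClos (fun N => pANDClass N ∨ pOR11Class N ∨ tORClass N) N := by
  obtain ⟨hTWF, hAND, hI1, hO1⟩ := h
  obtain ⟨hPetri, hIT, hOT, hInon, hOnon, hConn⟩ := hTWF
  obtain ⟨i, hIi⟩ := Finset.card_eq_one.mp hI1
  obtain ⟨o, hOo⟩ := Finset.card_eq_one.mp hO1
  have hiI : i ∈ N.I := by rw [hIi]; exact Finset.mem_singleton_self i
  have hoO : o ∈ N.O := by rw [hOo]; exact Finset.mem_singleton_self o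
  have hiT : i ∈ N.T := hIT hiI
  have hoT : o ∈ N.T := hOT hoO
  have hiN : i ∈ N.nodes := Finset.mem_union_right _ hiT
  have hoN : o ∈ N.nodes := Finset.mem_union_right _ hoT
  have noInI : ∀ x, (x, i) ∉ N.F := by
    intro x hx
    have hxn : x ∈ N.nodes := by
      rcases hPetri.2 _ hx with ⟨h1, _⟩ | ⟨h1, _⟩
      · exact Finset.mem_union_left _ h1
      · exact Finset.mem_union_right _ h1
    obtain ⟨i', hi', hp⟩ := hConn.1 x hxn
    rw [hIi, Finset.mem_singleton] at hi'; rw [hi'] at hp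
    exact hAND.1 i (Relation.TransGen.tail' hp hx)
  have noOutO : ∀ x, (o, x) ∉ N.F := by
    intro x hx
    have hxn : x ∈ N.nodes := by
      rcases hPetri.2 _ hx with ⟨_, h1⟩ | ⟨_, h1⟩
      · exact Finset.mem_union_right _ h1
      · exact Finset.mem_union_left _ h1
    obtain ⟨o', ho', hp⟩ := hConn.2 x hxn
    rw [hOo, Finset.mem_singleton] at ho'; rw [ho'] at hp
    exact hAND.1 o (Relation.TransGen.head' hx hp)
  by_cases hio : i = o
  · -- degenerate case: N is the trivial net, which is tOR
    subst hio
    have hnode : ∀ x ∈ N.nodes, x = i := by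
      intro x hx
      by_contra hne
      obtain ⟨i', hi', h1⟩ := hConn.1 x hx
      rw [hIi, Finset.mem_singleton] at hi'; rw [hi'] at h1
      obtain ⟨o', ho', h2⟩ := hConn.2 x hx
      rw [hOo, Finset.mem_singleton] at ho'; rw [ho'] at h2
      have ht2 : Relation.TransGen N.edge x i := by
        rcases Relation.reflTransGen_iff_eq_or_transGen.mp h2 with h | h
        · exact absurd h.symm hne
        · exact h
      exact hAND.1 i (Relation.TransGen.trans_right h1 ht2)
    have hP : ∀ p, p ∉ N.P := by
      intro p hp
      have := hnode p (Finset.mem_union_left _ hp)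
      subst this
      exact Finset.disjoint_left.mp hPetri.1 hp hiT
    have hF : ∀ e, e ∉ N.F := by
      intro e he
      rcases hPetri.2 e he with ⟨h1, _⟩ | ⟨_, h1⟩ <;> exact hP _ h1
    have hFe : N.F = ∅ := Finset.eq_empty_of_forall_notMem hF
    refine SClos.base N (Or.inr (Or.inr ⟨⟨hPetri, hIT, hOT, hInon, hOnon, hConn⟩, ?_⟩))
    intro t ht
    have hti : t = i := hnode t (Finset.mem_union_right _ ht)
    subst hti
    constructor
    · left
      refine ⟨hiI, ?_⟩
      rw [Net.inEdges, hFe]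
      simp
    · left
      refine ⟨hoO, ?_⟩
      rw [Net.outEdges, hFe]
      simp
  · -- main case
    obtain ⟨q, hq⟩ := Infinite.exists_notMem_finset N.nodes
    have hqi : q ≠ i := fun h => hq (h ▸ hiN)
    have hqo : q ≠ o := fun h => hq (h ▸ hoN)
    set M : Net := ⟨N.P, (N.T.erase o).erase i, N.F.filter (fun e => e.1 ≠ i ∧ e.2 ≠ o),
      N.outEdges i, N.inEdges o⟩ with hMdef
    set T0 : Net := ⟨{q}, {i, o}, {(i, q), (q, o)}, {i}, {o}⟩ with hT0def
    have hMF : ∀ a b : ℕ, (a, b) ∈ M.F ↔ (a, b) ∈ N.F ∧ a ≠ i ∧ b ≠ o := by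
      intro a b; simp [hMdef, Finset.mem_filter]
    have hMedge : ∀ a b : ℕ, M.edge a b ↔ (a, b) ∈ N.F ∧ a ≠ i ∧ b ≠ o := hMF
    -- paths in N avoiding i as source and o as target are paths in M
    have pathM : ∀ a x, N.pathReach a x → x ≠ o → a ≠ i → M.pathReach a x := by
      intro a x hpath
      induction hpath using Relation.ReflTransGen.head_induction_on with
      | refl => intro _ _; exact Relation.ReflTransGen.refl
      | head h' hrest ih =>
        rename_i a' c
        intro hxo hai
        have hci : c ≠ i := fun hc => noInI a' (hc ▸ h')
        have hco : c ≠ o := by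
          intro hc; subst hc
          rcases hrest.cases_head with h | ⟨d, hd, _⟩
          · exact hxo h.symm
          · exact noOutO d hd
        exact Relation.ReflTransGen.head ((hMedge a' c).mpr ⟨h', hai, hco⟩) (ih hxo hci)
    have hMnodes : ∀ x ∈ M.nodes, x ∈ N.nodes ∧ x ≠ i ∧ x ≠ o := by
      intro x hx
      rcases Finset.mem_union.mp hx with hx | hx
      · refine ⟨Finset.mem_union_left _ hx, ?_, ?_⟩
        · intro h; subst h; exact Finset.disjoint_left.mp hPetri.1 hx hiT
        · intro h; subst h; exact Finset.disjoint_left.mp hPetri.1 hx hoT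
      · obtain ⟨h1, h2, h3⟩ : x ≠ i ∧ x ≠ o ∧ x ∈ N.T := by
          simpa [hMdef, Finset.mem_erase, and_assoc] using hx
        exact ⟨Finset.mem_union_right _ h3, h1, h2⟩
    have hMconn : M.Connected := by
      constructor
      · intro x hx
        obtain ⟨hxn, hxi, hxo⟩ := hMnodes x hx
        obtain ⟨i', hi', hp⟩ := hConn.1 x hxn
        rw [hIi, Finset.mem_singleton] at hi'; rw [hi'] at hp
        rcases hp.cases_head with h | ⟨c, hc, hrest⟩
        · exact absurd h.symm hxi
        · have hci : c ≠ i := by intro h; exact noInI i (h ▸ hc)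
          exact ⟨c, Net.mem_outEdges'.mpr hc, pathM c x hrest hxo hci⟩
      · intro x hx
        obtain ⟨hxn, hxi, hxo⟩ := hMnodes x hx
        obtain ⟨o', ho', hp⟩ := hConn.2 x hxn
        rw [hOo, Finset.mem_singleton] at ho'; rw [ho'] at hp
        rcases hp.cases_tail with h | ⟨c, hrest, hc⟩
        · exact absurd h.symm hxo
        · have hco : c ≠ o := by intro h; exact noOutO o (h ▸ hc)
          exact ⟨c, Net.mem_inEdges'.mpr hc, pathM x c hrest hco hxi⟩
    have hMPWF : M.IsPWF := by
      refine ⟨⟨?_, ?_⟩, ?_, ?_, ?_, ?_, hMconn⟩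
      · exact Finset.disjoint_of_subset_right ((Finset.erase_subset _ _).trans (Finset.erase_subset _ _)) hPetri.1
      · rintro ⟨a, b⟩ he
        obtain ⟨he', hai, hbo⟩ := (hMF a b).mp he
        rcases hPetri.2 _ he' with ⟨h1, h2⟩ | ⟨h1, h2⟩
        · left
          refine ⟨h1, Finset.mem_erase.mpr ⟨?_, Finset.mem_erase.mpr ⟨hbo, h2⟩⟩⟩
          intro h; exact noInI a (h ▸ he')
        · right
          refine ⟨Finset.mem_erase.mpr ⟨hai, Finset.mem_erase.mpr ⟨?_, h1⟩⟩, h2⟩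
          intro h; exact noOutO b (h ▸ he')
      · intro p hp
        have := Net.mem_outEdges'.mp hp
        rcases hPetri.2 _ this with ⟨h1, h2⟩ | ⟨h1, h2⟩
        · exact absurd hiT (Finset.disjoint_left.mp hPetri.1 h1)
        · exact h2
      · intro p hp
        have := Net.mem_inEdges'.mp hp
        rcases hPetri.2 _ this with ⟨h1, h2⟩ | ⟨h1, h2⟩
        · exact h1
        · exact absurd hoT (Finset.disjoint_left.mp hPetri.1 h2)
      · obtain ⟨o', ho', hp⟩ := hConn.2 i hiN
        rw [hOo, Finset.mem_singleton] at ho'; rw [ho'] at hp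
        rcases hp.cases_head with h | ⟨c, hc, _⟩
        · exact absurd h hio
        · exact ⟨c, Net.mem_outEdges'.mpr hc⟩
      · obtain ⟨i', hi', hp⟩ := hConn.1 o hoN
        rw [hIi, Finset.mem_singleton] at hi'; rw [hi'] at hp
        rcases hp.cases_tail with h | ⟨c, _, hc⟩
        · exact absurd h.symm hio
        · exact ⟨c, Net.mem_inEdges'.mpr hc⟩
    have hMinE : ∀ p, p ≠ o → ∀ a, a ∈ M.inEdges p ↔ ((a, p) ∈ N.F ∧ a ≠ i) := by
      intro p hpo a
      rw [Net.mem_inEdges', hMF]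
      tauto
    have hMoutE : ∀ p, p ≠ i → ∀ b, b ∈ M.outEdges p ↔ ((p, b) ∈ N.F ∧ b ≠ o) := by
      intro p hpi b
      rw [Net.mem_outEdges', hMF]
      tauto
    have hMAND : M.IsAND := by
      constructor
      · intro x hx
        exact hAND.1 x (Relation.TransGen.mono (r := M.edge) (p := N.edge) (fun a b h => (Finset.mem_filter.mp h).1) x x hx)
      · intro p hp
        have hpP : p ∈ N.P := hp
        have hpi : p ≠ i := fun h => Finset.disjoint_left.mp hPetri.1 hpP (h ▸ hiT)
        have hpo : p ≠ o := fun h => Finset.disjoint_left.mp hPetri.1 hpP (h ▸ hoT)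
        have hpI : p ∉ N.I := fun h => Finset.disjoint_left.mp hPetri.1 hpP (hIT h)
        have hpO : p ∉ N.O := fun h => Finset.disjoint_left.mp hPetri.1 hpP (hOT h)
        obtain ⟨hin, hout⟩ := hAND.2 p hpP
        have hcard_in : (N.inEdges p).card = 1 := by
          rcases hin with ⟨h, _⟩ | ⟨_, h⟩
          · exact absurd h hpI
          · exact h
        have hcard_out : (N.outEdges p).card = 1 := by
          rcases hout with ⟨h, _⟩ | ⟨_, h⟩
          · exact absurd h hpO
          · exact h
        constructor
        · by_cases hpMI : p ∈ M.I
          · left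
            refine ⟨hpMI, ?_⟩
            have hip : (i, p) ∈ N.F := Net.mem_outEdges'.mp hpMI
            obtain ⟨b, hb⟩ := Finset.card_eq_one.mp hcard_in
            have hbi : b = i := by
              have : i ∈ N.inEdges p := Net.mem_inEdges'.mpr hip
              rw [hb, Finset.mem_singleton] at this
              exact this.symm
            subst hbi
            have : M.inEdges p = ∅ := by
              apply Finset.eq_empty_of_forall_notMem
              intro a ha
              obtain ⟨ha1, ha2⟩ := (hMinE p hpo a).mp ha
              have : a ∈ N.inEdges p := Net.mem_inEdges'.mpr ha1
              rw [hb, Finset.mem_singleton] at this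
              exact ha2 this
            rw [this]; simp
          · right
            refine ⟨hpMI, ?_⟩
            have : M.inEdges p = N.inEdges p := by
              ext a
              rw [hMinE p hpo a, Net.mem_inEdges']
              constructor
              · exact fun h => h.1
              · intro h
                refine ⟨h, fun hai => hpMI ?_⟩
                exact Net.mem_outEdges'.mpr (hai ▸ h)
            rw [this]; exact hcard_in
        · by_cases hpMO : p ∈ M.O
          · left
            refine ⟨hpMO, ?_⟩
            have hpoF : (p, o) ∈ N.F := Net.mem_inEdges'.mp hpMO
            obtain ⟨b, hb⟩ := Finset.card_eq_one.mp hcard_out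
            have hbo : b = o := by
              have : o ∈ N.outEdges p := Net.mem_outEdges'.mpr hpoF
              rw [hb, Finset.mem_singleton] at this
              exact this.symm
            subst hbo
            have : M.outEdges p = ∅ := by
              apply Finset.eq_empty_of_forall_notMem
              intro a ha
              obtain ⟨ha1, ha2⟩ := (hMoutE p hpi a).mp ha
              have : a ∈ N.outEdges p := Net.mem_outEdges'.mpr ha1
              rw [hb, Finset.mem_singleton] at this
              exact ha2 this
            rw [this]; simp
          · right
            refine ⟨hpMO, ?_⟩
            have : M.outEdges p = N.outEdges p := by
              ext b
              rw [hMoutE p hpi b, Net.mem_outEdges']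
              constructor
              · exact fun h => h.1
              · intro h
                refine ⟨h, fun hbo => hpMO ?_⟩
                exact Net.mem_inEdges'.mpr (hbo ▸ h)
            rw [this]; exact hcard_out
    -- T0 is a one-input one-output tOR net
    have hT0F : ∀ a b : ℕ, (a, b) ∈ T0.F ↔ (a = i ∧ b = q) ∨ (a = q ∧ b = o) := by
      intro a b
      simp [hT0def, Finset.mem_insert, Prod.ext_iff]
    have hT0TWF : T0.IsTWF := by
      refine ⟨⟨?_, ?_⟩, ?_, ?_, ⟨i, Finset.mem_singleton_self i⟩, ⟨o, Finset.mem_singleton_self o⟩, ?_, ?_⟩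
      · simp [hT0def, Ne.symm hqi, Ne.symm hqo, hqi, hqo]
      · rintro ⟨a, b⟩ he
        rcases (hT0F a b).mp he with ⟨rfl, rfl⟩ | ⟨rfl, rfl⟩
        · right; simp [hT0def]
        · left; simp [hT0def]
      · intro x hx; simp [hT0def] at hx ⊢; tauto
      · intro x hx; simp [hT0def] at hx ⊢; tauto
      · intro x hx
        refine ⟨i, Finset.mem_singleton_self i, ?_⟩
        have hx' : x = q ∨ x = i ∨ x = o := by
          simp [Net.nodes, hT0def] at hx; tauto
        have e1 : T0.edge i q := (hT0F i q).mpr (Or.inl ⟨rfl, rfl⟩)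
        have e2 : T0.edge q o := (hT0F q o).mpr (Or.inr ⟨rfl, rfl⟩)
        rcases hx' with rfl | rfl | rfl
        · exact Relation.ReflTransGen.single e1
        · exact Relation.ReflTransGen.refl
        · exact Relation.ReflTransGen.head e1 (Relation.ReflTransGen.single e2)
      · intro x hx
        refine ⟨o, Finset.mem_singleton_self o, ?_⟩
        have hx' : x = q ∨ x = i ∨ x = o := by
          simp [Net.nodes, hT0def] at hx; tauto
        have e1 : T0.edge i q := (hT0F i q).mpr (Or.inl ⟨rfl, rfl⟩)
        have e2 : T0.edge q o := (hT0F q o).mpr (Or.inr ⟨rfl, rfl⟩)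
        rcases hx' with rfl | rfl | rfl
        · exact Relation.ReflTransGen.single e2
        · exact Relation.ReflTransGen.head e1 (Relation.ReflTransGen.single e2)
        · exact Relation.ReflTransGen.refl
    have hT0inq : T0.inEdges q = {i} := by
      ext a
      rw [Net.mem_inEdges', hT0F]
      simp [hqo, eq_comm]
    have hT0outq : T0.outEdges q = {o} := by
      ext b
      rw [Net.mem_outEdges', hT0F]
      simp [hqi, fun h : q = o => hqo h]
    have hT0OR : T0.IsOR := by
      have hin_i : T0.inEdges i = ∅ := by
        apply Finset.eq_empty_of_forall_notMem
        intro a ha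
        rcases (hT0F a i).mp (Net.mem_inEdges'.mp ha) with ⟨_, h⟩ | ⟨_, h⟩
        · exact hqi h.symm
        · exact hio h
      have hout_i : T0.outEdges i = {q} := by
        ext b
        rw [Net.mem_outEdges', hT0F]
        constructor
        · rintro (⟨_, h2⟩ | ⟨h, _⟩)
          · rw [Finset.mem_singleton]; exact h2
          · exact absurd h.symm hqi
        · intro hb
          rw [Finset.mem_singleton] at hb
          exact Or.inl ⟨rfl, hb⟩
      have hin_o : T0.inEdges o = {q} := by
        ext a
        rw [Net.mem_inEdges', hT0F]
        constructor
        · rintro (⟨_, h⟩ | ⟨h2, _⟩)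
          · exact absurd h.symm hqo
          · rw [Finset.mem_singleton]; exact h2
        · intro ha
          rw [Finset.mem_singleton] at ha
          exact Or.inr ⟨ha, rfl⟩
      have hout_o : T0.outEdges o = ∅ := by
        apply Finset.eq_empty_of_forall_notMem
        intro b hb
        rcases (hT0F o b).mp (Net.mem_outEdges'.mp hb) with ⟨h, _⟩ | ⟨h, _⟩
        · exact hio h.symm
        · exact hqo h.symm
      intro t ht
      have ht' : t = i ∨ t = o := by simpa [hT0def] using ht
      have hiI0 : (i : ℕ) ∈ T0.I := by simp [hT0def]
      have hoO0 : (o : ℕ) ∈ T0.O := by simp [hT0def]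
      have hiO0 : (i : ℕ) ∉ T0.O := by simpa [hT0def] using hio
      have hoI0 : (o : ℕ) ∉ T0.I := by simpa [hT0def] using fun h : o = i => hio h.symm
      rcases ht' with h | h <;> rw [h]
      · exact ⟨Or.inl ⟨hiI0, by rw [hin_i]; simp⟩, Or.inr ⟨hiO0, by rw [hout_i]; simp⟩⟩
      · exact ⟨Or.inr ⟨hoI0, by rw [hin_o]; simp⟩, Or.inl ⟨hoO0, by rw [hout_o]; simp⟩⟩
    have hdisj : Disjoint T0.nodes M.nodes := by
      rw [Finset.disjoint_left]
      intro x hx hx'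
      obtain ⟨hxn, hxi, hxo⟩ := hMnodes x hx'
      have : x = q ∨ x = i ∨ x = o := by
        simp [Net.nodes, hT0def] at hx; tauto
      rcases this with rfl | rfl | rfl
      · exact hq hxn
      · exact hxi rfl
      · exact hxo rfl
    have hsub : T0.subst q M = N := by
      refine Net.ext' ?_ ?_ ?_ ?_ ?_
      · show (T0.P.erase q) ∪ M.P = N.P
        simp [hT0def, hMdef]
      · show (T0.T.erase q) ∪ M.T = N.T
        have h1 : T0.T.erase q = ({i, o} : Finset ℕ) := by
          rw [hT0def]
          exact Finset.erase_eq_of_notMem (by simp [hqi, hqo])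
        rw [h1]
        ext t
        simp only [hMdef, Finset.mem_union, Finset.mem_insert, Finset.mem_singleton,
          Finset.mem_erase]
        constructor
        · rintro ((h | h) | ⟨_, _, h⟩)
          · rw [h]; exact hiT
          · rw [h]; exact hoT
          · exact h
        · intro h
          by_cases hc1 : t = i
          · exact Or.inl (Or.inl hc1)
          by_cases hc2 : t = o
          · exact Or.inl (Or.inr hc2)
          · exact Or.inr ⟨hc1, hc2, h⟩
      · show (T0.F.filter fun e => e.1 ≠ q ∧ e.2 ≠ q) ∪ M.F
            ∪ (T0.inEdges q ×ˢ M.I) ∪ (M.O ×ˢ T0.outEdges q) = N.F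
        have h0 : (T0.F.filter fun e => e.1 ≠ q ∧ e.2 ≠ q) = ∅ := by
          apply Finset.eq_empty_of_forall_notMem
          rintro ⟨a, b⟩ hab
          obtain ⟨h1, h2, h3⟩ := Finset.mem_filter.mp hab
          rcases (hT0F a b).mp h1 with ⟨_, h⟩ | ⟨h, _⟩
          · exact h3 h
          · exact h2 h
        rw [h0, hT0inq, hT0outq, Finset.empty_union]
        ext ⟨a, b⟩
        simp only [Finset.mem_union, Finset.mem_product, Finset.mem_singleton]
        rw [hMF a b]
        constructor
        · rintro ((⟨h, _, _⟩ | ⟨ha, h⟩) | ⟨h, hb⟩)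
          · exact h
          · rw [ha]; exact Net.mem_outEdges'.mp h
          · rw [hb]; exact Net.mem_inEdges'.mp h
        · intro h
          by_cases hc1 : a = i
          · rw [hc1] at h
            exact Or.inl (Or.inr ⟨hc1, Net.mem_outEdges'.mpr h⟩)
          by_cases hc2 : b = o
          · rw [hc2] at h
            exact Or.inr ⟨Net.mem_inEdges'.mpr h, hc2⟩
          · exact Or.inl (Or.inl ⟨h, hc1, hc2⟩)
      · show (if q ∈ T0.I then (T0.I.erase q) ∪ M.I else T0.I) = N.I
        rw [if_neg (by simp [hT0def, hqi])]; rw [hIi]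
      · show (if q ∈ T0.O then (T0.O.erase q) ∪ M.O else T0.O) = N.O
        rw [if_neg (by simp [hT0def, hqo])]; rw [hOo]
    rw [← hsub]
    exact SClos.substP T0 M q
      (SClos.base T0 (Or.inr (Or.inr ⟨hT0TWF, hT0OR⟩)))
      (SClos.base M (Or.inl ⟨hMPWF, hMAND⟩))
      hMPWF (by simp [hT0def]) hdisj

theorem stmt7 :
    SClos (fun N => pANDClass N ∨ tAND11Class N ∨ pOR11Class N ∨ tORClass N)
      = SClos (fun N => pANDClass N ∨ pOR11Class N ∨ tORClass N) := by
  funext N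
  apply propext
  constructor
  · intro h
    induction h with
    | base N hN =>
      rcases hN with h | h | h | h
      · exact SClos.base N (Or.inl h)
      · exact keyLemma N h
      · exact SClos.base N (Or.inr (Or.inl h))
      · exact SClos.base N (Or.inr (Or.inr h))
    | substP N M p _ _ hM hp hd ih1 ih2 => exact SClos.substP N M p ih1 ih2 hM hp hd
    | substT N M t _ _ hM ht hd ih1 ih2 => exact SClos.substT N M t ih1 ih2 hM ht hd
  · intro h
    induction h with
    | base N hN =>
      rcases hN with h | h | h
      · exact SClos.base N (Or.inl h)
      · exact SClos.base N (Or.inr (Or.inr (Or.inl h)))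
      · exact SClos.base N (Or.inr (Or.inr (Or.inr h)))
    | substP N M p _ _ hM hp hd ih1 ih2 => exact SClos.substP N M p ih1 ih2 hM hp hd
    | substT N M t _ _ hM ht hd ih1 ih2 => exact SClos.substT N M t ih1 ih2 hM ht hd
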